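/- Fix q ∈ ℂ with q ≠ 0 and q not a root of unity, and c ∈ ℂ. Let (e₋₁, e₁, A) be a Podleś representation with parameter c on a finite-dimensional complex vector space V. If c ≠ c(n) = −1/(qⁿ + q⁻ⁿ)² for every integer n ≥ 1, then A is nilpotent. -/

import Mathlib

/-- A Podleś representation with parameter `c` on a complex vector space:
endomorphisms `e₋₁, e₁, A` satisfying `e₋₁∘e₁ = A − A² + c·id`,
`e₁∘e₋₁ = q²·A − q⁴·A² + c·id`, `e₁∘A = q²·A∘e₁` and `e₋₁∘A = q⁻²·A∘e₋₁`. -/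
def PodlesRep (q c : ℂ) {V : Type*} [AddCommGroup V] [Module ℂ V]
    (em e1 A : Module.End ℂ V) : Prop :=
  em * e1 = A - A ^ 2 + c • (1 : Module.End ℂ V) ∧
  e1 * em = q ^ 2 • A - q ^ 4 • A ^ 2 + c • (1 : Module.End ℂ V) ∧
  e1 * A = q ^ 2 • (A * e1) ∧
  em * A = (q ^ 2)⁻¹ • (A * em)

/-- Powers of an element that is not a root of unity are injective. -/
lemma podles_pow_inj {q : ℂ} (hq : q ≠ 0) (hq' : ∀ n : ℕ, 0 < n → q ^ n ≠ 1) :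
    Function.Injective fun k : ℕ => q ^ k := by
  have key : ∀ a b : ℕ, a < b → q ^ a = q ^ b → False := by
    intro a b h hab
    apply hq' (b - a) (by omega)
    have h2 : q ^ a * q ^ (b - a) = q ^ a * 1 := by
      rw [mul_one, ← pow_add, hab]
      congr 1
      omega
    exact mul_left_cancel₀ (pow_ne_zero a hq) h2
  intro a b hab
  simp only at hab
  rcases lt_trichotomy a b with h | h | h
  · exact absurd hab (fun hh => key a b h hh)
  · exact h
  · exact absurd hab.symm (fun hh => key b a h hh)

/-- An endomorphism of a finite-dimensional complex vector space all of whose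
eigenvalues vanish is nilpotent. -/
lemma podles_nilpotent_of_eigenvalues_zero {V : Type*} [AddCommGroup V] [Module ℂ V]
    [FiniteDimensional ℂ V] (A : Module.End ℂ V)
    (h : ∀ μ : ℂ, A.HasEigenvalue μ → μ = 0) : IsNilpotent A := by
  set p := minpoly ℂ A with hp
  have hint : IsIntegral ℂ A := Algebra.IsIntegral.isIntegral A
  have hm : p.Monic := minpoly.monic hint
  have hsplit : p.Splits := IsAlgClosed.splits p
  have hroots : ∀ μ ∈ p.roots, μ = 0 := by
    intro μ hμ
    exact h μ ((Module.End.hasEigenvalue_iff_isRoot).mpr (Polynomial.isRoot_of_mem_roots hμ))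
  have hcard : p.natDegree = Multiset.card p.roots := by
    exact hsplit.natDegree_eq_card_roots
  have hpX : p = Polynomial.X ^ p.natDegree := by
    conv_lhs => rw [hsplit.eq_prod_roots_of_monic hm]
    have hmap : p.roots.map (fun a => Polynomial.X - Polynomial.C a)
        = p.roots.map (fun _ => (Polynomial.X : Polynomial ℂ)) :=
      Multiset.map_congr rfl (fun μ hμ => by rw [hroots μ hμ, map_zero, sub_zero])
    rw [hmap, Multiset.map_const', Multiset.prod_replicate, hcard]
  refine ⟨p.natDegree, ?_⟩
  have haev := minpoly.aeval ℂ A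
  rw [← hp, hpX] at haev
  simpa using haev

/-- If `q` is nonzero and not a root of unity and `c ≠ c(n) = −1/(qⁿ+q⁻ⁿ)²` for every integer
`n ≥ 1`, then `A` is nilpotent in any finite-dimensional Podleś representation with
parameter `c`. -/
theorem stmt2 {V : Type*} [AddCommGroup V] [Module ℂ V] [FiniteDimensional ℂ V]
    (q : ℂ) (hq : q ≠ 0) (hq' : ∀ n : ℕ, 0 < n → q ^ n ≠ 1) (c : ℂ)
    (em e1 A : Module.End ℂ V) (hrep : PodlesRep q c em e1 A)
    (hc : ∀ n : ℕ, 1 ≤ n → c ≠ -1 / (q ^ n + (q ^ n)⁻¹) ^ 2) :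
    IsNilpotent A := by
  classical
  obtain ⟨hme, hem, h1A, hmA⟩ := hrep
  have hq2 : (q : ℂ) ^ 2 ≠ 0 := pow_ne_zero _ hq
  -- no injective sequence of eigenvalues
  have noseq : ∀ g : ℕ → ℂ, Function.Injective g → ¬ ∀ j, A.HasEigenvalue (g j) := by
    intro g hg hall
    exact (Set.infinite_of_injective_forall_mem hg hall) A.finite_hasEigenvalue
  -- applying e1 lowers eigenvalues by q²
  have hstepDown : ∀ (l : ℂ) (v : V), A v = l • v → A (e1 v) = ((q ^ 2)⁻¹ * l) • (e1 v) := by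
    intro l v hv
    have h := LinearMap.congr_fun h1A v
    simp only [Module.End.mul_apply, LinearMap.smul_apply] at h
    rw [hv, map_smul] at h
    have h2 := congrArg (fun x => (q ^ 2)⁻¹ • x) h
    simp only [smul_smul, inv_mul_cancel₀ hq2, one_smul] at h2
    exact h2.symm
  -- applying em raises eigenvalues by q²
  have hstepUp : ∀ (l : ℂ) (v : V), A v = l • v → A (em v) = (q ^ 2 * l) • (em v) := by
    intro l v hv
    have h := LinearMap.congr_fun hmA v
    simp only [Module.End.mul_apply, LinearMap.smul_apply] at h
    rw [hv, map_smul] at h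
    have h2 := congrArg (fun x => (q ^ 2) • x) h
    simp only [smul_smul, mul_inv_cancel₀ hq2, one_smul] at h2
    exact h2.symm
  -- eigenvector killed by e1 gives a quadratic equation
  have hQuadLow : ∀ (l : ℂ) (v : V), v ≠ 0 → A v = l • v → e1 v = 0 → l - l ^ 2 + c = 0 := by
    intro l v hvne hv he
    have h := LinearMap.congr_fun hme v
    simp only [Module.End.mul_apply, LinearMap.add_apply, LinearMap.sub_apply,
      LinearMap.smul_apply, Module.End.one_apply, pow_two] at h
    rw [he, map_zero, hv, map_smul, hv, smul_smul] at h
    have h2 : (l - l ^ 2 + c) • v = 0 := by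
      rw [add_smul, sub_smul, pow_two]
      exact h.symm
    rcases smul_eq_zero.mp h2 with h3 | h3
    · exact h3
    · exact absurd h3 hvne
  -- eigenvector killed by em gives a quadratic equation
  have hQuadHigh : ∀ (l : ℂ) (v : V), v ≠ 0 → A v = l • v → em v = 0 →
      q ^ 2 * l - q ^ 4 * l ^ 2 + c = 0 := by
    intro l v hvne hv he
    have h := LinearMap.congr_fun hem v
    simp only [Module.End.mul_apply, LinearMap.add_apply, LinearMap.sub_apply,
      LinearMap.smul_apply, Module.End.one_apply, pow_two] at h
    rw [he, map_zero, hv, map_smul, hv, smul_smul, smul_smul, smul_smul] at h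
    have h2 : (q ^ 2 * l - q ^ 4 * l ^ 2 + c) • v = 0 := by
      rw [add_smul, sub_smul, pow_two, show (q ^ 4 * l ^ 2 : ℂ) = q ^ 4 * l * l by ring]
      exact h.symm
    rcases smul_eq_zero.mp h2 with h3 | h3
    · exact h3
    · exact absurd h3 hvne
  apply podles_nilpotent_of_eigenvalues_zero
  intro μ₀ hμ₀
  by_contra hμ₀ne0
  -- the downward orbit of eigenvalues
  set f : ℕ → ℂ := fun k => ((q ^ 2)⁻¹) ^ k * μ₀ with hf
  have hqinv0 : ((q : ℂ) ^ 2)⁻¹ ≠ 0 := inv_ne_zero hq2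
  have hqinv1 : ∀ n : ℕ, 0 < n → ((q ^ 2)⁻¹) ^ n ≠ 1 := by
    intro n hn h
    apply hq' (2 * n) (by omega)
    have : ((q ^ (2 * n)) : ℂ)⁻¹ = 1 := by rw [pow_mul, ← inv_pow, h]
    rwa [inv_eq_one] at this
  have hfinj : Function.Injective f := by
    intro a b hab
    exact podles_pow_inj hqinv0 hqinv1 (mul_right_cancel₀ hμ₀ne0 hab)
  have hex : ∃ k, ¬ A.HasEigenvalue (f k) := by
    by_contra h
    push_neg at h
    exact noseq f hfinj h
  have hm0 : A.HasEigenvalue (f 0) := by simpa [hf] using hμ₀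
  have hmpos : 0 < Nat.find hex := by
    rcases Nat.eq_zero_or_pos (Nat.find hex) with h | h
    · exact absurd hm0 (h ▸ Nat.find_spec hex)
    · exact h
  set k := Nat.find hex - 1 with hk
  have hkev : A.HasEigenvalue (f k) := by
    by_contra h
    exact Nat.find_min hex (by omega) h
  have hk1 : ¬ A.HasEigenvalue (f (k + 1)) := by
    have : k + 1 = Nat.find hex := by omega
    rw [this]
    exact Nat.find_spec hex
  obtain ⟨v, hvmem, hvne⟩ := hkev.exists_hasEigenvector
  have hv : A v = f k • v := Module.End.mem_eigenspace_iff.mp hvmem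
  set l := f k with hl
  have hlne : l ≠ 0 := mul_ne_zero (pow_ne_zero _ hqinv0) hμ₀ne0
  have hfk1 : f (k + 1) = (q ^ 2)⁻¹ * l := by
    simp only [hf, hl, pow_succ]
    ring
  have he1v : e1 v = 0 := by
    by_contra hne
    apply hk1
    rw [hfk1]
    exact Module.End.hasEigenvalue_of_hasEigenvector
      ⟨Module.End.mem_eigenspace_iff.mpr (hstepDown l v hv), hne⟩
  have hc1 : l - l ^ 2 + c = 0 := hQuadLow l v hvne hv he1v
  -- the upward chain
  have hchain : ∀ j, A ((em ^ j) v) = ((q ^ 2) ^ j * l) • ((em ^ j) v) := by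
    intro j
    induction j with
    | zero => simpa using hv
    | succ n ih =>
      have h1 : (em ^ (n + 1)) v = em ((em ^ n) v) := by
        rw [pow_succ', Module.End.mul_apply]
      rw [h1, hstepUp _ _ ih]
      congr 1
      ring
  have hinj2 : Function.Injective fun j : ℕ => (q ^ 2) ^ j * l := by
    intro a b hab
    have hq21 : ∀ n : ℕ, 0 < n → (q ^ 2) ^ n ≠ 1 := by
      intro n hn h
      exact hq' (2 * n) (by omega) (by rwa [pow_mul])
    exact podles_pow_inj hq2 hq21 (mul_right_cancel₀ hlne hab)
  have hex2 : ∃ n, (em ^ n) v = 0 := by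
    by_contra h
    push_neg at h
    apply noseq (fun j => (q ^ 2) ^ j * l) hinj2
    intro j
    exact Module.End.hasEigenvalue_of_hasEigenvector
      ⟨Module.End.mem_eigenspace_iff.mpr (hchain j), h j⟩
  set n := Nat.find hex2 with hn
  have hn0 : 0 < n := by
    rcases Nat.eq_zero_or_pos n with h | h
    · have := Nat.find_spec hex2
      rw [← hn, h] at this
      simp only [pow_zero, Module.End.one_apply] at this
      exact absurd this hvne
    · exact h
  set w := (em ^ (n - 1)) v with hw
  have hwne : w ≠ 0 := by
    intro h
    exact Nat.find_min hex2 (show n - 1 < n by omega) h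
  have hemw : em w = 0 := by
    have hspec := Nat.find_spec hex2
    rw [← hn] at hspec
    rw [show n = (n - 1) + 1 by omega, pow_succ', Module.End.mul_apply] at hspec
    exact hspec
  have hwv : A w = ((q ^ 2) ^ (n - 1) * l) • w := hchain (n - 1)
  have hc2 : q ^ 2 * ((q ^ 2) ^ (n - 1) * l) - q ^ 4 * ((q ^ 2) ^ (n - 1) * l) ^ 2 + c = 0 :=
    hQuadHigh _ w hwne hwv hemw
  -- final algebra
  set u := (q ^ 2) ^ n with hu
  have hu' : u = (q ^ 2) ^ (n - 1) * q ^ 2 := by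
    rw [hu, ← pow_succ]
    congr 1
    omega
  have hc2' : u * l - u ^ 2 * l ^ 2 + c = 0 := by
    rw [hu']
    linear_combination hc2
  have hune : u ≠ 1 := by
    rw [hu, ← pow_mul]
    exact hq' (2 * n) (by omega)
  have key : (u - 1) * (l * (1 - (1 + u) * l)) = 0 := by
    linear_combination hc2' - hc1
  rcases mul_eq_zero.mp key with h | h
  · exact hune (by linear_combination h)
  rcases mul_eq_zero.mp h with h' | h'
  · exact hlne h'
  have hs : (1 + u) * l = 1 := by linear_combination -h'
  have hu0 : (1 : ℂ) + u ≠ 0 := by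
    intro h0
    rw [h0, zero_mul] at hs
    exact zero_ne_one hs
  have hleq : l = (1 + u)⁻¹ := eq_inv_of_mul_eq_one_left (mul_comm (1+u) l ▸ hs)
  apply hc n (by omega)
  have hcval : c = l ^ 2 - l := by linear_combination hc1
  have hqn : (q : ℂ) ^ n ≠ 0 := pow_ne_zero _ hq
  have huqn : u = (q ^ n) ^ 2 := by rw [hu, ← pow_mul, ← pow_mul, Nat.mul_comm]
  have hu0' : (1 : ℂ) + (q ^ n) ^ 2 ≠ 0 := by rwa [huqn] at hu0
  rw [hcval, hleq, huqn]
  have hden : (q : ℂ) ^ n + (q ^ n)⁻¹ ≠ 0 := by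
    intro h0
    apply hu0'
    have := congrArg (fun x => (q ^ n) * x) h0
    simp only [mul_add, mul_inv_cancel₀ hqn, mul_zero] at this
    linear_combination this
  rw [eq_div_iff (pow_ne_zero 2 hden)]
  field_simp
  ring
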